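/- Let F, F̂ : [0,∞) → ℝ be continuous, let 𝔽 : [0,∞) → ℝ be bounded and measurable, and let 0 = t_0 < t_1 < … < t_m be real numbers. Assume: F is differentiable on (0,∞) with convex derivative; for each k ∈ {1, …, m}, F̂ is differentiable on (t_{k−1}, t_k) with derivative equal to the restriction of an affine function; F̂(t_k) = 𝔽(t_k) for k = 0, 1, …, m; F̂(x) = 𝔽(x) for all x ≥ t_m; for each k ∈ {0, 1, …, m−1} and every r ∈ (t_k, t_{k+1}], ∫_{t_k}^r 𝔽(x) dx ≤ ∫_{t_k}^r F̂(x) dx; and for each k ∈ {1, …, m} and every r ∈ [t_{k−1}, t_k), ∫_r^{t_k} 𝔽(x) dx ≥ ∫_r^{t_k} F̂(x) dx. Then sup_{x ∈ [0,∞)} |F̂(x) − F(x)| ≤ 2·sup_{x ∈ [0,∞)} |𝔽(x) − F(x)|. -/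

import Mathlib

open MeasureTheory Set

lemma affine_concaveOn (s : Set ℝ) (hs : Convex ℝ s) (α β : ℝ) :
    ConcaveOn ℝ s (fun x => α * x + β) :=
  ⟨hs, fun x _ y _ a b _ _ hab => le_of_eq (by simp only [smul_eq_mul]; linear_combination β * hab)⟩

lemma affine_convexOn (s : Set ℝ) (hs : Convex ℝ s) (α β : ℝ) :
    ConvexOn ℝ s (fun x => α * x + β) :=
  ⟨hs, fun x _ y _ a b _ _ hab => le_of_eq (by simp only [smul_eq_mul]; linear_combination (-β) * hab)⟩

lemma integral_quad (u v d e c : ℝ) :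
    ∫ x in u..v, (e + c * (x - d) ^ 2) =
      (v - u) * e + c * (((v - d) ^ 3 - (u - d) ^ 3) / 3) := by
  have h1 : IntervalIntegrable (fun _ : ℝ => e) volume u v := intervalIntegrable_const
  have h2 : IntervalIntegrable (fun x : ℝ => c * (x - d) ^ 2) volume u v :=
    (Continuous.intervalIntegrable (by fun_prop) u v)
  rw [intervalIntegral.integral_add h1 h2, intervalIntegral.integral_const,
    intervalIntegral.integral_const_mul]
  have h3 : (∫ x in u..v, (x - d) ^ 2) = ((v - d) ^ 3 - (u - d) ^ 3) / 3 := by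
    rw [intervalIntegral.integral_comp_sub_right (fun x => x ^ 2) d, integral_pow]
    norm_num
  rw [h3, smul_eq_mul]
  try ring
lemma quad_lower_right (h φ : ℝ → ℝ) {a p b : ℝ} (hap : a < p) (hpb : p < b)
    (hcont : ContinuousOn h (Icc p b))
    (hd : ∀ z ∈ Ioo a b, HasDerivAt h (φ z) z)
    (hconc : ConcaveOn ℝ (Ioo a b) φ) (hp0 : φ p = 0) :
    ∀ s ∈ Icc p b, h p + (h b - h p) / (b - p) ^ 2 * (s - p) ^ 2 ≤ h s := by
  set c : ℝ := (h b - h p) / (b - p) ^ 2 with hc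
  have hbp : (b - p) ^ 2 ≠ 0 := pow_ne_zero _ (sub_ne_zero.2 hpb.ne')
  set Q : ℝ → ℝ := fun s => h p + c * (s - p) ^ 2 with hQ
  set D : ℝ → ℝ := fun s => h s - Q s with hD
  set ψ : ℝ → ℝ := fun z => φ z - (2 * c * z + -(2 * c * p)) with hψ
  have hDd : ∀ z ∈ Ioo a b, HasDerivAt D (ψ z) z := by
    intro z hz
    have h1 : HasDerivAt (fun s : ℝ => (s - p) ^ 2) (2 * (z - p)) z := by
      have := ((hasDerivAt_id z).sub_const p).fun_pow 2
      simpa using this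
    have h2 : HasDerivAt Q (2 * c * z + -(2 * c * p)) z := by
      have := (h1.const_mul c).const_add (h p)
      exact this.congr_deriv (by ring)
    exact (hd z hz).sub h2
  have hψconc : ConcaveOn ℝ (Ioo a b) ψ :=
    hconc.sub (affine_convexOn _ (convex_Ioo a b) (2 * c) (-(2 * c * p)))
  have hDb : D b = 0 := by
    simp only [hD, hQ, hc]
    field_simp
    rw [mul_div_assoc, div_self (sub_ne_zero.2 hpb.ne')]; ring
  have hDp : D p = 0 := by simp [hD, hQ]
  have hQcont : Continuous Q := by fun_prop
  have hDcont : ContinuousOn D (Icc p b) := hcont.sub hQcont.continuousOn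
  -- main claim : D ≥ 0 on Icc p b
  intro s hs
  rcases eq_or_lt_of_le hs.1 with heq | hps
  · rw [← heq]; simp
  rcases eq_or_lt_of_le hs.2 with heq2 | hsb
  · rw [heq2, hc]
    have hne : b - p ≠ 0 := sub_ne_zero.2 hpb.ne'
    apply le_of_eq
    field_simp
    ring
  by_contra hlt
  push_neg at hlt
  have hDs : D s < 0 := by simp only [hD, hQ]; linarith
  -- MVT on [p, s]
  obtain ⟨ξ₁, hξ₁mem, hξ₁⟩ := exists_hasDerivAt_eq_slope D ψ hps
    (hDcont.mono (Icc_subset_Icc le_rfl hs.2))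
    (fun z hz => hDd z ⟨lt_trans hap hz.1, lt_trans hz.2 hsb⟩)
  -- MVT on [s, b]
  obtain ⟨ξ₂, hξ₂mem, hξ₂⟩ := exists_hasDerivAt_eq_slope D ψ hsb
    (hDcont.mono (Icc_subset_Icc hs.1 le_rfl))
    (fun z hz => hDd z ⟨lt_trans hap (lt_trans hps hz.1), hz.2⟩)
  have hψ₁neg : ψ ξ₁ < 0 := by
    rw [hξ₁, hDp]
    apply div_neg_of_neg_of_pos <;> [skip; linarith [hps]]
    linarith
  have hψ₂pos : 0 < ψ ξ₂ := by
    rw [hξ₂, hDb]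
    apply div_pos <;> linarith [hsb]
  -- concavity contradiction at ξ₁ between p and ξ₂
  have hpξ₂ : p < ξ₂ := lt_trans hps hξ₂mem.1
  have hξ₁ξ₂ : ξ₁ < ξ₂ := lt_trans hξ₁mem.2 hξ₂mem.1
  set μ : ℝ := (ξ₂ - ξ₁) / (ξ₂ - p) with hμ
  set ν : ℝ := (ξ₁ - p) / (ξ₂ - p) with hν
  have hd2 : (0:ℝ) < ξ₂ - p := by linarith
  have hμ0 : 0 ≤ μ := div_nonneg (by linarith) hd2.le
  have hν0 : 0 ≤ ν := by
    apply div_nonneg _ hd2.le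
    linarith [hξ₁mem.1]
  have hμν : μ + ν = 1 := by
    rw [hμ, hν, ← add_div]
    field_simp
    ring
  have hcomb := hψconc.2 (show p ∈ Ioo a b from ⟨hap, lt_trans hps hsb⟩)
      (show ξ₂ ∈ Ioo a b from ⟨lt_trans hap hpξ₂, hξ₂mem.2⟩) hμ0 hν0 hμν
  have hpt : μ • p + ν • ξ₂ = ξ₁ := by
    simp only [smul_eq_mul, hμ, hν]
    field_simp
    ring
  rw [hpt] at hcomb
  have hψp : ψ p = 0 := by simp only [hψ, hp0]; ring
  rw [hψp] at hcomb
  simp only [smul_eq_mul, mul_zero, zero_add] at hcomb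
  have hν0' : 0 < ν := div_pos (by linarith [hξ₁mem.1]) hd2
  nlinarith [mul_pos hν0' hψ₂pos]
lemma quad_upper_left (h φ : ℝ → ℝ) {a q b : ℝ} (haq : a < q) (hqb : q < b)
    (hcont : ContinuousOn h (Icc a q))
    (hd : ∀ z ∈ Ioo a b, HasDerivAt h (φ z) z)
    (hconc : ConcaveOn ℝ (Ioo a b) φ) (hq0 : φ q = 0) :
    ∀ s ∈ Icc a q, h s ≤ h q + (h a - h q) / (q - a) ^ 2 * (s - q) ^ 2 := by
  set c : ℝ := (h a - h q) / (q - a) ^ 2 with hc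
  have hne : q - a ≠ 0 := sub_ne_zero.2 haq.ne'
  set Q : ℝ → ℝ := fun s => h q + c * (s - q) ^ 2 with hQ
  set D : ℝ → ℝ := fun s => h s - Q s with hD
  set ψ : ℝ → ℝ := fun z => φ z - (2 * c * z + -(2 * c * q)) with hψ
  have hDd : ∀ z ∈ Ioo a b, HasDerivAt D (ψ z) z := by
    intro z hz
    have h1 : HasDerivAt (fun s : ℝ => (s - q) ^ 2) (2 * (z - q)) z := by
      have := ((hasDerivAt_id z).sub_const q).fun_pow 2
      simpa using this
    have h2 : HasDerivAt Q (2 * c * z + -(2 * c * q)) z := by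
      have := (h1.const_mul c).const_add (h q)
      exact this.congr_deriv (by ring)
    exact (hd z hz).sub h2
  have hψconc : ConcaveOn ℝ (Ioo a b) ψ :=
    hconc.sub (affine_convexOn _ (convex_Ioo a b) (2 * c) (-(2 * c * q)))
  have hDa : D a = 0 := by
    simp only [hD, hQ, hc]
    field_simp
    ring
  have hDq : D q = 0 := by simp [hD, hQ]
  have hQcont : Continuous Q := by fun_prop
  have hDcont : ContinuousOn D (Icc a q) := hcont.sub hQcont.continuousOn
  intro s hs
  rcases eq_or_lt_of_le hs.1 with heq | has
  · rw [← heq]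
    apply le_of_eq
    rw [hc]
    field_simp
    ring
  rcases eq_or_lt_of_le hs.2 with heq2 | hsq
  · rw [heq2]; simp
  by_contra hlt
  push_neg at hlt
  have hDs : 0 < D s := by simp only [hD, hQ]; linarith
  obtain ⟨ξ₁, hξ₁mem, hξ₁⟩ := exists_hasDerivAt_eq_slope D ψ has
    (hDcont.mono (Icc_subset_Icc le_rfl hs.2))
    (fun z hz => hDd z ⟨hz.1, lt_trans (lt_trans hz.2 hsq) hqb⟩)
  obtain ⟨ξ₂, hξ₂mem, hξ₂⟩ := exists_hasDerivAt_eq_slope D ψ hsq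
    (hDcont.mono (Icc_subset_Icc hs.1 le_rfl))
    (fun z hz => hDd z ⟨lt_trans has hz.1, lt_trans hz.2 hqb⟩)
  have hψ₁pos : 0 < ψ ξ₁ := by
    rw [hξ₁, hDa]
    apply div_pos <;> linarith [has]
  have hψ₂neg : ψ ξ₂ < 0 := by
    rw [hξ₂, hDq]
    apply div_neg_of_neg_of_pos <;> [skip; linarith [hsq]]
    linarith
  have hξ₁ξ₂ : ξ₁ < ξ₂ := lt_trans hξ₁mem.2 hξ₂mem.1
  have hξ₂q : ξ₂ < q := hξ₂mem.2
  set μ : ℝ := (q - ξ₂) / (q - ξ₁) with hμ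
  set ν : ℝ := (ξ₂ - ξ₁) / (q - ξ₁) with hν
  have hd2 : (0:ℝ) < q - ξ₁ := by linarith
  have hμ0 : 0 ≤ μ := div_nonneg (by linarith) hd2.le
  have hν0 : 0 ≤ ν := div_nonneg (by linarith) hd2.le
  have hμν : μ + ν = 1 := by
    rw [hμ, hν, ← add_div]
    field_simp
    ring
  have hcomb := hψconc.2
      (show ξ₁ ∈ Ioo a b from ⟨hξ₁mem.1, lt_trans (lt_trans hξ₁mem.2 hsq) hqb⟩)
      (show q ∈ Ioo a b from ⟨haq, hqb⟩) hμ0 hν0 hμν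
  have hpt : μ • ξ₁ + ν • q = ξ₂ := by
    simp only [smul_eq_mul, hμ, hν]
    field_simp
    ring
  rw [hpt] at hcomb
  have hψq : ψ q = 0 := by simp only [hψ, hq0]; ring
  rw [hψq] at hcomb
  simp only [smul_eq_mul, mul_zero, add_zero] at hcomb
  have hμ0' : 0 < μ := div_pos (by linarith) hd2
  nlinarith [mul_pos hμ0' hψ₁pos]

/-- Theorem 1(2) in conditional form: `‖F̂ - F‖_∞ ≤ 2 ‖𝔽 - F‖_∞` on `[0,∞)`. -/
theorem glued_abs_bound
    (F Fhat EDF : ℝ → ℝ) (m : ℕ) (t : ℕ → ℝ)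
    (ht0 : t 0 = 0) (htlt : ∀ k, k < m → t k < t (k + 1))
    (hFcont : ContinuousOn F (Ici 0))
    (hFhatcont : ContinuousOn Fhat (Ici 0))
    (hmeas : AEMeasurable EDF (volume.restrict (Ici 0)))
    (hbdd : ∃ C : ℝ, ∀ x ∈ Ici (0 : ℝ), |EDF x| ≤ C)
    (hFconv : ∃ f : ℝ → ℝ, (∀ x ∈ Ioi (0 : ℝ), HasDerivAt F (f x) x) ∧ ConvexOn ℝ (Ioi 0) f)
    (hFhatlin : ∀ k, 1 ≤ k → k ≤ m → ∃ α β : ℝ,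
      ∀ x ∈ Ioo (t (k - 1)) (t k), HasDerivAt Fhat (α * x + β) x)
    (hknots : ∀ k ≤ m, Fhat (t k) = EDF (t k))
    (htail : ∀ x, t m ≤ x → Fhat x = EDF x)
    (hintfwd : ∀ k, k < m → ∀ r ∈ Ioc (t k) (t (k + 1)),
      ∫ x in (t k)..r, EDF x ≤ ∫ x in (t k)..r, Fhat x)
    (hintbwd : ∀ k, 1 ≤ k → k ≤ m → ∀ r ∈ Ico (t (k - 1)) (t k),
      ∫ x in r..(t k), Fhat x ≤ ∫ x in r..(t k), EDF x) :
    sSup ((fun x => |Fhat x - F x|) '' Ici 0) ≤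
      2 * sSup ((fun x => |EDF x - F x|) '' Ici 0) := by
  classical
  obtain ⟨C, hC⟩ := hbdd
  obtain ⟨f, hf, hfconv⟩ := hFconv
  have htnn : ∀ k, k ≤ m → 0 ≤ t k := by
    intro k hk
    induction k with
    | zero => rw [ht0]
    | succ n ih =>
      have h1 := htlt n (by omega)
      have h2 := ih (by omega)
      linarith
  by_cases hB : BddAbove ((fun x => |EDF x - F x|) '' Ici 0)
  swap
  · -- unbounded junk case
    obtain ⟨K, hK⟩ := isCompact_Icc.exists_bound_of_continuousOn
      (hFcont.mono (Icc_subset_Ici_self : Icc 0 (t m) ⊆ Ici 0))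
    have hLHS : ¬ BddAbove ((fun x => |Fhat x - F x|) '' Ici 0) := by
      rw [not_bddAbove_iff] at hB ⊢
      intro M
      obtain ⟨y, ⟨x, hx, rfl⟩, hy⟩ := hB (max M (C + K))
      have hxt : t m ≤ x := by
        by_contra hcon
        push_neg at hcon
        have h1 : |EDF x - F x| ≤ C + K := by
          have h2 := hC x hx
          have h3 := hK x ⟨hx, hcon.le⟩
          rw [Real.norm_eq_abs] at h3
          have h4 := abs_add_le (EDF x) (-(F x))
          rw [abs_neg] at h4
          have h5 : |EDF x - F x| ≤ |EDF x| + |F x| := by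
            simpa [sub_eq_add_neg] using h4
          linarith
        have := le_max_right M (C + K)
        simp only at hy
        linarith
      refine ⟨|Fhat x - F x|, ⟨x, hx, rfl⟩, ?_⟩
      rw [htail x hxt]
      simp only at hy ⊢
      exact lt_of_le_of_lt (le_max_left _ _) hy
    rw [Real.sSup_of_not_bddAbove hB, Real.sSup_of_not_bddAbove hLHS]
    norm_num
  · set ε := sSup ((fun x => |EDF x - F x|) '' Ici 0) with hεdef
    have hbound : ∀ x : ℝ, 0 ≤ x → |EDF x - F x| ≤ ε := fun x hx => le_csSup hB ⟨x, hx, rfl⟩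
    have hε0 : 0 ≤ ε := le_trans (abs_nonneg _) (hbound 0 le_rfl)
    -- integrability helpers
    have hEDFii : ∀ u v : ℝ, 0 ≤ u → u ≤ v → IntervalIntegrable EDF volume u v := by
      intro u v hu huv
      rw [intervalIntegrable_iff_integrableOn_Ioc_of_le huv]
      have hsub : Ioc u v ⊆ Ici (0:ℝ) := fun z hz => le_trans hu hz.1.le
      have hmeas' : AEMeasurable EDF (volume.restrict (Ioc u v)) :=
        hmeas.mono_measure (Measure.restrict_mono hsub le_rfl)
      apply Integrable.mono' (g := fun _ => C)
        (integrableOn_const measure_Ioc_lt_top.ne) hmeas'.aestronglyMeasurable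
      apply (ae_restrict_iff' measurableSet_Ioc).2
      exact ae_of_all _ fun z hz => by rw [Real.norm_eq_abs]; exact hC z (hsub hz)
    have hFii : ∀ u v : ℝ, 0 ≤ u → u ≤ v → IntervalIntegrable F volume u v := by
      intro u v hu huv
      exact (hFcont.mono (fun z hz => le_trans hu hz.1)).intervalIntegrable_of_Icc huv
    have hFhii : ∀ u v : ℝ, 0 ≤ u → u ≤ v → IntervalIntegrable Fhat volume u v := by
      intro u v hu huv
      exact (hFhatcont.mono (fun z hz => le_trans hu hz.1)).intervalIntegrable_of_Icc huv
    -- pointwise bound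
    have key : ∀ x : ℝ, 0 ≤ x → |Fhat x - F x| ≤ 2 * ε := by
      intro x hx
      by_cases hxtail : t m ≤ x
      · rw [htail x hxtail]
        linarith [hbound x hx]
      push_neg at hxtail
      set k := Nat.findGreatest (fun j => t j ≤ x) m with hkdef
      have hPk : t k ≤ x :=
        Nat.findGreatest_spec (P := fun j => t j ≤ x) (Nat.zero_le m)
          (show t 0 ≤ x by rw [ht0]; exact hx)
      have hkm : k ≤ m := Nat.findGreatest_le m
      have hklt : k < m := by
        rcases eq_or_lt_of_le hkm with he | hl
        · exfalso; rw [he] at hPk; linarith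
        · exact hl
      have hxlt : x < t (k + 1) := by
        by_contra hcon
        push_neg at hcon
        exact Nat.findGreatest_is_greatest (P := fun j => t j ≤ x)
          (hkdef ▸ Nat.lt_succ_self k) (by omega) hcon
      have hab : t k < t (k + 1) := htlt k hklt
      have ha0 : 0 ≤ t k := htnn k hklt.le
      have hb0 : 0 ≤ t (k + 1) := htnn (k + 1) (by omega)
      rcases eq_or_lt_of_le hPk with heq | hax
      · rw [← heq, hknots k hklt.le]
        linarith [hbound (t k) ha0]
      -- now t k < x < t (k+1); set up the interval machinery
      have hIccsub : Icc (t k) (t (k + 1)) ⊆ Ici (0:ℝ) := fun z hz => le_trans ha0 hz.1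
      have hIoosub : Ioo (t k) (t (k + 1)) ⊆ Ioi (0:ℝ) := fun z hz => lt_of_le_of_lt ha0 hz.1
      have hcont : ContinuousOn (fun s => Fhat s - F s) (Icc (t k) (t (k + 1))) :=
        (hFhatcont.mono hIccsub).sub (hFcont.mono hIccsub)
      obtain ⟨α, β, hαβ⟩ := hFhatlin (k + 1) (by omega) (by omega)
      simp only [Nat.add_sub_cancel] at hαβ
      have hdh : ∀ z ∈ Ioo (t k) (t (k + 1)),
          HasDerivAt (fun s => Fhat s - F s) ((α * z + β) - f z) z :=
        fun z hz => (hαβ z hz).sub (hf z (hIoosub hz))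
      have hφconc : ConcaveOn ℝ (Ioo (t k) (t (k + 1))) (fun z => (α * z + β) - f z) :=
        (affine_concaveOn _ (convex_Ioo _ _) α β).sub
          (hfconv.subset hIoosub (convex_Ioo _ _))
      have hhA : |Fhat (t k) - F (t k)| ≤ ε := by
        rw [hknots k hklt.le]; exact hbound _ ha0
      have hhB : |Fhat (t (k + 1)) - F (t (k + 1))| ≤ ε := by
        rw [hknots (k + 1) (by omega)]; exact hbound _ hb0
      obtain ⟨p, hpmem, hpmax⟩ := isCompact_Icc.exists_isMaxOn
        (nonempty_Icc.2 hab.le) hcont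
      obtain ⟨q, hqmem, hqmin⟩ := isCompact_Icc.exists_isMinOn
        (nonempty_Icc.2 hab.le) hcont
      have hxmem : x ∈ Icc (t k) (t (k + 1)) := ⟨hax.le, hxlt.le⟩
      -- upper bound
      have hup : Fhat x - F x ≤ 2 * ε := by
        have hxp : Fhat x - F x ≤ Fhat p - F p := (isMaxOn_iff.mp hpmax) x hxmem
        rcases eq_or_lt_of_le hpmem.1 with hpa | hap
        · rw [← hpa] at hxp
          have := (abs_le.mp hhA).2
          linarith
        rcases eq_or_lt_of_le hpmem.2 with hpb | hpb'
        · rw [hpb] at hxp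
          have := (abs_le.mp hhB).2
          linarith
        have hp0 : 0 ≤ p := le_trans ha0 hpmem.1
        have hφp : (α * p + β) - f p = 0 :=
          (hpmax.isLocalMax (Icc_mem_nhds hap hpb')).hasDerivAt_eq_zero
            (hdh p ⟨hap, hpb'⟩)
        have hquad := quad_lower_right (fun s => Fhat s - F s) (fun z => (α * z + β) - f z)
          hap hpb' (hcont.mono (Icc_subset_Icc hpmem.1 le_rfl)) hdh hφconc hφp
        have hgii : IntervalIntegrable (fun s => Fhat s - F s) volume p (t (k + 1)) :=
          (hFhii p _ hp0 hpb'.le).sub (hFii p _ hp0 hpb'.le)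
        have hint1 : (∫ s in p..(t (k + 1)), ((Fhat p - F p) +
              (((Fhat (t (k + 1)) - F (t (k + 1))) - (Fhat p - F p)) / ((t (k + 1)) - p) ^ 2)
                * (s - p) ^ 2))
            ≤ ∫ s in p..(t (k + 1)), (Fhat s - F s) :=
          intervalIntegral.integral_mono_on hpb'.le
            (Continuous.intervalIntegrable (by fun_prop) _ _) hgii
            (fun s hs => by simpa using hquad s hs)
        rw [integral_quad] at hint1
        have hint2 : (∫ s in p..(t (k + 1)), (Fhat s - F s)) ≤ ε * ((t (k + 1)) - p) := by
          have e1 : (∫ s in p..(t (k + 1)), (Fhat s - F s))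
              = (∫ s in p..(t (k + 1)), Fhat s) - ∫ s in p..(t (k + 1)), F s :=
            intervalIntegral.integral_sub (hFhii _ _ hp0 hpb'.le) (hFii _ _ hp0 hpb'.le)
          have e2 := hintbwd (k + 1) (by omega) (by omega) p
          simp only [Nat.add_sub_cancel] at e2
          have e2' := e2 ⟨hpmem.1, hpb'⟩
          have e3 : (∫ s in p..(t (k + 1)), EDF s) - (∫ s in p..(t (k + 1)), F s)
              = ∫ s in p..(t (k + 1)), (EDF s - F s) :=
            (intervalIntegral.integral_sub (hEDFii _ _ hp0 hpb'.le) (hFii _ _ hp0 hpb'.le)).symm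
          have e4 : (∫ s in p..(t (k + 1)), (EDF s - F s))
              ≤ ∫ s in p..(t (k + 1)), (fun _ => ε) s := by
            apply intervalIntegral.integral_mono_on hpb'.le
              ((hEDFii _ _ hp0 hpb'.le).sub (hFii _ _ hp0 hpb'.le)) intervalIntegrable_const
            intro z hz
            have hz0 : 0 ≤ z := le_trans hp0 hz.1
            exact le_trans (le_abs_self _) (hbound z hz0)
          rw [intervalIntegral.integral_const, smul_eq_mul] at e4
          linarith
        have hbp2 : (0:ℝ) < t (k + 1) - p := by linarith
        have hBml := (abs_le.mp hhB).1
        have hbpne : ((t (k + 1)) - p) ^ 2 ≠ 0 := pow_ne_zero _ (by linarith)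
        have heq : (((Fhat (t (k + 1)) - F (t (k + 1))) - (Fhat p - F p)) / ((t (k + 1)) - p) ^ 2)
              * ((((t (k + 1)) - p) ^ 3 - (p - p) ^ 3) / 3)
            = ((Fhat (t (k + 1)) - F (t (k + 1))) - (Fhat p - F p)) * ((t (k + 1)) - p) / 3 := by
          field_simp
          ring
        rw [heq] at hint1
        nlinarith [hint1, hint2, hBml, hbp2, hxp]
      have hlo : -(2 * ε) ≤ Fhat x - F x := by
        have hxq : Fhat q - F q ≤ Fhat x - F x := (isMinOn_iff.mp hqmin) x hxmem
        rcases eq_or_lt_of_le hqmem.1 with hqa | haq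
        · rw [← hqa] at hxq
          have := (abs_le.mp hhA).1
          linarith
        rcases eq_or_lt_of_le hqmem.2 with hqb | hqb'
        · rw [hqb] at hxq
          have := (abs_le.mp hhB).1
          linarith
        have hq0 : 0 ≤ q := le_trans ha0 hqmem.1
        have hφq : (α * q + β) - f q = 0 :=
          (hqmin.isLocalMin (Icc_mem_nhds haq hqb')).hasDerivAt_eq_zero
            (hdh q ⟨haq, hqb'⟩)
        have hquad := quad_upper_left (fun s => Fhat s - F s) (fun z => (α * z + β) - f z)
          haq hqb' (hcont.mono (Icc_subset_Icc le_rfl hqmem.2)) hdh hφconc hφq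
        have hgii : IntervalIntegrable (fun s => Fhat s - F s) volume (t k) q :=
          (hFhii _ _ ha0 haq.le).sub (hFii _ _ ha0 haq.le)
        have hint1 : (∫ s in (t k)..q, (Fhat s - F s))
            ≤ ∫ s in (t k)..q, ((Fhat q - F q) +
              (((Fhat (t k) - F (t k)) - (Fhat q - F q)) / (q - t k) ^ 2) * (s - q) ^ 2) :=
          intervalIntegral.integral_mono_on haq.le hgii
            (Continuous.intervalIntegrable (by fun_prop) _ _)
            (fun s hs => by simpa using hquad s hs)
        rw [integral_quad] at hint1
        have hint2 : -ε * (q - t k) ≤ ∫ s in (t k)..q, (Fhat s - F s) := by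
          have e1 : (∫ s in (t k)..q, (Fhat s - F s))
              = (∫ s in (t k)..q, Fhat s) - ∫ s in (t k)..q, F s :=
            intervalIntegral.integral_sub (hFhii _ _ ha0 haq.le) (hFii _ _ ha0 haq.le)
          have e2' := hintfwd k hklt q ⟨haq, hqb'.le⟩
          have e3 : (∫ s in (t k)..q, EDF s) - (∫ s in (t k)..q, F s)
              = ∫ s in (t k)..q, (EDF s - F s) :=
            (intervalIntegral.integral_sub (hEDFii _ _ ha0 haq.le) (hFii _ _ ha0 haq.le)).symm
          have e4 : (∫ s in (t k)..q, (fun _ => -ε) s)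
              ≤ ∫ s in (t k)..q, (EDF s - F s) := by
            apply intervalIntegral.integral_mono_on haq.le intervalIntegrable_const
              ((hEDFii _ _ ha0 haq.le).sub (hFii _ _ ha0 haq.le))
            intro z hz
            have hz0 : 0 ≤ z := le_trans ha0 hz.1
            exact (abs_le.mp (hbound z hz0)).1
          rw [intervalIntegral.integral_const, smul_eq_mul] at e4
          linarith
        have hqa2 : (0:ℝ) < q - t k := by linarith
        have hAml := (abs_le.mp hhA).1
        have hqane : (q - t k) ^ 2 ≠ 0 := pow_ne_zero _ (by linarith)
        have heq : (((Fhat (t k) - F (t k)) - (Fhat q - F q)) / (q - t k) ^ 2)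
              * (((q - q) ^ 3 - (t k - q) ^ 3) / 3)
            = ((Fhat (t k) - F (t k)) - (Fhat q - F q)) * (q - t k) / 3 := by
          field_simp
          ring
        rw [heq] at hint1
        nlinarith [hint1, hint2, hAml, (abs_le.mp hhA).2, hqa2, hxq]
      exact abs_le.mpr ⟨hlo, hup⟩
    apply Real.sSup_le
    · rintro y ⟨x, hx, rfl⟩
      exact key x hx
    · linarith
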